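/- The function g(I1) = Nγ1 I1/(Nσ1 + β2 φ(I1)) satisfies g(0) = 0 and is strictly increasing on [0, N(1−1/R2)). -/

import Mathlib

theorem g_zero_and_strict_mono
    (N β1 β2 γ1 γ2 σ1 σ2 ε : ℝ)
    (hN : 0 < N) (hβ1 : 0 < β1) (hβ2 : 0 < β2) (hγ1 : 0 < γ1) (hγ2 : 0 < γ2)
    (hσ1 : 0 < σ1) (hσ2 : 0 < σ2) (hβ2γ2 : β2 > γ2) (hε0 : 0 ≤ ε) (hε1 : ε ≤ 1)
    (φ g : ℝ → ℝ)
    (hφ : ∀ I1, φ I1 = (N * (β2 - γ2) - β2 * I1) * (β1 * (1 - ε) * I1 + N * σ2) /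
          (β2 * (β1 * (1 - ε) * I1 + N * (γ2 + σ2))))
    (hg : ∀ I1, g I1 = N * γ1 * I1 / (N * σ1 + β2 * φ I1)) :
    g 0 = 0 ∧ StrictMonoOn g (Set.Ico 0 (N * (1 - 1 / (β2 / γ2)))) := by
  have hc : 0 ≤ β1 * (1 - ε) := mul_nonneg hβ1.le (by linarith)
  have hbound : N * (1 - 1 / (β2 / γ2)) = N * (β2 - γ2) / β2 := by
    field_simp
  have hφ' : ∀ x, 0 ≤ x → β2 * φ x =
      (N * (β2 - γ2) - β2 * x) * (β1 * (1 - ε) * x + N * σ2) /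
      (β1 * (1 - ε) * x + N * (γ2 + σ2)) := by
    intro x hx
    have hq : 0 < β1 * (1 - ε) * x + N * (γ2 + σ2) := by
      have : 0 ≤ β1 * (1 - ε) * x := mul_nonneg hc hx
      nlinarith
    rw [hφ]
    field_simp
  have hDpos : ∀ x, 0 ≤ x → x < N * (β2 - γ2) / β2 → 0 < N * σ1 + β2 * φ x := by
    intro x hx hx2
    rw [hφ' x hx]
    have hq : 0 < β1 * (1 - ε) * x + N * (γ2 + σ2) := by
      have : 0 ≤ β1 * (1 - ε) * x := mul_nonneg hc hx
      nlinarith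
    have hp1 : 0 < N * (β2 - γ2) - β2 * x := by
      nlinarith [(lt_div_iff₀ hβ2).mp hx2]
    have hp2 : 0 < β1 * (1 - ε) * x + N * σ2 := by
      have : 0 ≤ β1 * (1 - ε) * x := mul_nonneg hc hx
      nlinarith
    have : 0 < (N * (β2 - γ2) - β2 * x) * (β1 * (1 - ε) * x + N * σ2) /
        (β1 * (1 - ε) * x + N * (γ2 + σ2)) := div_pos (mul_pos hp1 hp2) hq
    nlinarith [mul_pos hN hσ1]
  constructor
  · rw [hg]; simp
  · rw [hbound]
    intro a ha b hb hab
    obtain ⟨ha0, haN⟩ := ha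
    obtain ⟨hb0, hbN⟩ := hb
    have hDa := hDpos a ha0 haN
    have hDb := hDpos b hb0 hbN
    rw [hg a, hg b, div_lt_div_iff₀ hDa hDb]
    rw [hφ' a ha0, hφ' b hb0]
    have haA : β2 * a < N * (β2 - γ2) := by
      have := (lt_div_iff₀ hβ2).mp haN
      nlinarith
    set c := β1 * (1 - ε) with hcdef
    set A := N * (β2 - γ2) with hAdef
    set d := N * σ2 with hddef
    set e := N * (γ2 + σ2) with hedef
    set S := N * σ1 with hSdef
    have hA : 0 < A := by rw [hAdef]; nlinarith [mul_pos hN (sub_pos.mpr hβ2γ2)]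
    have hd : 0 < d := by rw [hddef]; positivity
    have he : 0 < e := by rw [hedef]; positivity
    have hS : 0 < S := by rw [hSdef]; positivity
    have hed : 0 < e - d := by rw [hedef, hddef]; nlinarith [mul_pos hN hγ2]
    have hQa : 0 < c * a + e := by
      have h1 : 0 ≤ c * a := mul_nonneg hc ha0
      linarith
    have hQb : 0 < c * b + e := by
      have h1 : 0 ≤ c * b := mul_nonneg hc hb0
      linarith
    rw [← sub_pos]
    have hdiff : N * γ1 * b * (S + (A - β2 * a) * (c * a + d) / (c * a + e)) -
        N * γ1 * a * (S + (A - β2 * b) * (c * b + d) / (c * b + e)) =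
        N * γ1 * ((b - a) * (S * e * e + A * d * e + c * (a + b) * (S * e + A * d) +
          c * c * (a * b) * (S + A) + β2 * c * (a * b) * (e - d))) /
        ((c * a + e) * (c * b + e)) := by
      field_simp
      ring
    rw [hdiff]
    have hbr : 0 < S * e * e + A * d * e + c * (a + b) * (S * e + A * d) +
        c * c * (a * b) * (S + A) + β2 * c * (a * b) * (e - d) := by
      have t1 : 0 < S * e * e := mul_pos (mul_pos hS he) he
      have t2 : 0 < A * d * e := mul_pos (mul_pos hA hd) he
      have t3 : 0 ≤ c * (a + b) * (S * e + A * d) :=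
        mul_nonneg (mul_nonneg hc (by linarith))
          (le_of_lt (add_pos (mul_pos hS he) (mul_pos hA hd)))
      have t4 : 0 ≤ c * c * (a * b) * (S + A) :=
        mul_nonneg (mul_nonneg (mul_nonneg hc hc) (mul_nonneg ha0 hb0))
          (le_of_lt (add_pos hS hA))
      have t5 : 0 ≤ β2 * c * (a * b) * (e - d) :=
        mul_nonneg (mul_nonneg (mul_nonneg hβ2.le hc) (mul_nonneg ha0 hb0)) hed.le
      linarith
    have hba : 0 < b - a := by linarith
    exact div_pos (mul_pos (mul_pos hN hγ1) (mul_pos hba hbr)) (mul_pos hQa hQb)
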